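/- Let Y be a metric space on which a group Γ acts by isometries, and suppose the action is proper and cocompact. Then there exists r₀ > 0 such that for every y ∈ Y and every s with 0 < s < r₀, the closed ball of radius s centered at y is compact; in particular, Y is locally compact. -/

import Mathlib

open Metric Set

/-- Mixed finiteness: the set of `γ` with `γ • ball m a` meeting `ball y b` is finite,
given the properness-type finiteness at `m` with radius `R`, when `2*b + a ≤ R`, `a ≤ R`. -/
lemma aux_mixed_finite {Y : Type*} [MetricSpace Y] {Γ : Type*} [Group Γ] [MulAction Γ Y]
    (hiso : ∀ γ : Γ, Isometry (fun y : Y => γ • y))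
    (m y : Y) (a b R : ℝ)
    (hfin : {γ : Γ | ((fun z : Y => γ • z) '' Metric.ball m R ∩ Metric.ball m R).Nonempty}.Finite)
    (hR : 2 * b + a ≤ R) (haR : a ≤ R) :
    {γ : Γ | ((fun z : Y => γ • z) '' Metric.ball m a ∩ Metric.ball y b).Nonempty}.Finite := by
  set G := {γ : Γ | ((fun z : Y => γ • z) '' Metric.ball m a ∩ Metric.ball y b).Nonempty} with hG
  rcases Set.eq_empty_or_nonempty G with h | ⟨γ₀, hγ₀⟩
  · rw [h]; exact Set.finite_empty
  · obtain ⟨_, ⟨q, hq, rfl⟩, hq'⟩ := hγ₀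
    apply Set.Finite.subset (hfin.image (fun δ => γ₀ * δ))
    rintro γ ⟨_, ⟨p, hp, rfl⟩, hp'⟩
    refine ⟨γ₀⁻¹ * γ, ⟨(γ₀⁻¹ * γ) • p, ⟨p, ?_, rfl⟩, ?_⟩, by group⟩
    · exact Metric.ball_subset_ball haR hp
    · simp only [Metric.mem_ball] at *
      have key : dist ((γ₀⁻¹ * γ) • p) m = dist (γ • p) (γ₀ • m) := by
        rw [← (hiso γ₀).dist_eq]
        congr 1
        simp [smul_smul]
      rw [key]
      have h1 : dist (γ • p) (γ₀ • m) ≤ dist (γ • p) y + dist y (γ₀ • q) + dist (γ₀ • q) (γ₀ • m) :=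
        dist_triangle4 _ _ _ _
      have h2 : dist (γ₀ • q) (γ₀ • m) = dist q m := (hiso γ₀).dist_eq q m
      rw [dist_comm y (γ₀ • q)] at h1
      calc dist (γ • p) (γ₀ • m) ≤ dist (γ • p) y + dist (γ₀ • q) y + dist q m := by
            rw [← h2]; exact h1
        _ < b + b + a := by gcongr
        _ ≤ R := by linarith

/-- If a group `Γ` acts properly and cocompactly by isometries on a
metric space `Y`, then there exists `r₀ > 0` such that for every `y ∈ Y` and every
`s` with `0 < s < r₀`, the closed ball of radius `s` centered at `y` is compact;
in particular, `Y` is locally compact. -/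
theorem locally_compact_of_proper_cocompact
    {Y : Type*} [MetricSpace Y] {Γ : Type*} [Group Γ] [MulAction Γ Y]
    (hiso : ∀ γ : Γ, Isometry (fun y : Y => γ • y))
    (hcocompact : ∃ K : Set Y, IsCompact K ∧ (⋃ γ : Γ, (fun y : Y => γ • y) '' K) = Set.univ)
    (hproper : ∀ x : Y, ∃ r > 0,
      {γ : Γ | ((fun y : Y => γ • y) '' Metric.ball x r ∩ Metric.ball x r).Nonempty}.Finite) :
    (∃ r₀ > 0, ∀ (y : Y) (s : ℝ), 0 < s → s < r₀ → IsCompact (Metric.closedBall y s)) ∧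
      LocallyCompactSpace Y := by
  -- trivial case: empty space
  by_cases hY : IsEmpty Y
  · constructor
    · refine ⟨1, one_pos, fun y => (hY.false y).elim⟩
    · exact ⟨fun x => (hY.false x).elim⟩
  rw [not_isEmpty_iff] at hY
  obtain ⟨K, hK, hcover⟩ := hcocompact
  choose r hr hfin using hproper
  -- K is nonempty
  have hKne : K.Nonempty := by
    by_contra h
    rw [Set.not_nonempty_iff_eq_empty] at h
    subst h
    simp only [Set.image_empty, Set.iUnion_empty] at hcover
    have : hY.some ∈ (∅ : Set Y) := hcover ▸ Set.mem_univ hY.some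
    exact this
  -- finite subcover of K by small balls
  obtain ⟨t, htK, htcov⟩ := hK.elim_nhds_subcover (fun m => Metric.ball m (r m / 8))
    (fun m _ => Metric.ball_mem_nhds m (by have := hr m; positivity))
  have htne : t.Nonempty := by
    obtain ⟨k, hk⟩ := hKne
    obtain ⟨m, hm, _⟩ := Set.mem_iUnion₂.mp (htcov hk)
    exact ⟨m, hm⟩
  set s : ℝ := t.inf' htne (fun m => r m / 8) with hs
  have hspos : 0 < s := by
    rw [hs, Finset.lt_inf'_iff]
    intro m _
    have := hr m
    positivity
  have hsle : ∀ m ∈ t, s ≤ r m / 8 := fun m hm => Finset.inf'_le _ hm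
  -- main compactness claim
  have main : ∀ y : Y, IsCompact (Metric.closedBall y s) ∧
      ∀ s' : ℝ, s' ≤ s → IsCompact (Metric.closedBall y s') := by
    intro y
    -- the finite set of relevant group elements
    set G : Set Γ := ⋃ m ∈ t, {γ : Γ | ((fun z : Y => γ • z) '' Metric.ball m (r m / 8) ∩
        Metric.ball y (2 * s)).Nonempty} with hGdef
    have hGfin : G.Finite := by
      apply Set.Finite.biUnion t.finite_toSet
      intro m hm
      apply aux_mixed_finite hiso m y (r m / 8) (2 * s) (r m) (hfin m)
      · have := hsle m hm; linarith
      · have := hr m; linarith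
    -- the compact set covering the ball
    have hCcomp : IsCompact (⋃ γ ∈ G, (fun z : Y => γ • z) '' K) :=
      hGfin.isCompact_biUnion (fun γ _ => hK.image (hiso γ).continuous)
    have hsub : Metric.closedBall y s ⊆ ⋃ γ ∈ G, (fun z : Y => γ • z) '' K := by
      intro z hz
      have hz' : z ∈ ⋃ γ : Γ, (fun y : Y => γ • y) '' K := hcover ▸ Set.mem_univ z
      obtain ⟨_, ⟨γ, rfl⟩, p, hp, rfl⟩ := hz'
      obtain ⟨m, hm, hpm⟩ := Set.mem_iUnion₂.mp (htcov hp)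
      refine Set.mem_biUnion ?_ ⟨p, hp, rfl⟩
      rw [hGdef]
      apply Set.mem_biUnion hm
      refine ⟨γ • p, ⟨p, hpm, rfl⟩, ?_⟩
      rw [Metric.mem_ball]
      calc dist (γ • p) y ≤ s := Metric.mem_closedBall.mp hz
        _ < 2 * s := by linarith
    constructor
    · exact hCcomp.of_isClosed_subset Metric.isClosed_closedBall hsub
    · intro s' hs'
      exact hCcomp.of_isClosed_subset Metric.isClosed_closedBall
        ((Metric.closedBall_subset_closedBall hs').trans hsub)
  have hball : ∀ (y : Y) (s' : ℝ), 0 < s' → s' < s → IsCompact (Metric.closedBall y s') :=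
    fun y s' _ hs' => (main y).2 s' hs'.le
  refine ⟨⟨s, hspos, hball⟩, ?_⟩
  constructor
  intro x n hn
  obtain ⟨ε, hε, hεn⟩ := Metric.mem_nhds_iff.mp hn
  refine ⟨Metric.closedBall x (min (ε / 2) (s / 2)), ?_, ?_, ?_⟩
  · exact Metric.closedBall_mem_nhds x (by positivity)
  · refine Set.Subset.trans (Metric.closedBall_subset_ball ?_) hεn
    exact lt_of_le_of_lt (min_le_left _ _) (by linarith)
  · exact hball x _ (by positivity) (lt_of_le_of_lt (min_le_right _ _) (by linarith))
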